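/- Let N > 1, 0 ≤ ε < 1, Nε < 1, and let Q₂ = (√(N(1−ε)) + √(1−Nε))². If Q > Q₂, then both real roots of the quadratic (1−Nε)α² + (1+Q−N)α + Q = 0 are strictly negative. -/

import Mathlib

open Real

theorem stmt2 (N ε Q : ℝ) (hN : 1 < N) (hε0 : 0 ≤ ε) (hε1 : ε < 1)
    (hNε : N * ε < 1)
    (hQ : (Real.sqrt (N * (1 - ε)) + Real.sqrt (1 - N * ε)) ^ 2 < Q) :
    ∃ a b : ℝ, a < b ∧ a < 0 ∧ b < 0 ∧
      (1 - N * ε) * a ^ 2 + (1 + Q - N) * a + Q = 0 ∧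
      (1 - N * ε) * b ^ 2 + (1 + Q - N) * b + Q = 0 ∧
      (∀ x : ℝ, (1 - N * ε) * x ^ 2 + (1 + Q - N) * x + Q = 0 → x = a ∨ x = b) := by
  have hA : (0:ℝ) < 1 - N * ε := by linarith
  set s := Real.sqrt (N * (1 - ε)) with hs
  set t := Real.sqrt (1 - N * ε) with ht
  have hs0 : 0 ≤ s := Real.sqrt_nonneg _
  have ht0 : 0 ≤ t := Real.sqrt_nonneg _
  have hs2 : s ^ 2 = N * (1 - ε) := Real.sq_sqrt (by nlinarith)
  have ht2 : t ^ 2 = 1 - N * ε := Real.sq_sqrt (by linarith)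
  have hQ0 : 0 < Q := lt_of_le_of_lt (by positivity) hQ
  have hB : 0 < 1 + Q - N := by nlinarith [mul_nonneg hs0 ht0]
  set A := 1 - N * ε with hAdef
  set B := 1 + Q - N with hBdef
  have hD : 0 < B ^ 2 - 4 * A * Q := by
    have h1 : 0 < Q - (s + t) ^ 2 := by linarith
    have h2 : 0 < Q - (s - t) ^ 2 := by nlinarith [mul_nonneg hs0 ht0]
    nlinarith [mul_pos h1 h2]
  set d := Real.sqrt (B ^ 2 - 4 * A * Q) with hd
  have hd2 : d ^ 2 = B ^ 2 - 4 * A * Q := Real.sq_sqrt hD.le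
  have hd0 : 0 < d := Real.sqrt_pos.mpr hD
  have hdB : d < B := by nlinarith [hd2, hd0, hQ0, hA]
  have h2A : (0:ℝ) < 2 * A := by linarith
  have h2A' : (2 * A) ≠ 0 := h2A.ne'
  refine ⟨(-B - d) / (2 * A), (-B + d) / (2 * A), ?_, ?_, ?_, ?_, ?_, ?_⟩
  · apply div_lt_div_of_pos_right ?_ h2A
    linarith
  · exact div_neg_of_neg_of_pos (by linarith) h2A
  · exact div_neg_of_neg_of_pos (by linarith) h2A
  · field_simp
    ring_nf
    linear_combination hd2
  · field_simp
    ring_nf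
    linear_combination hd2
  · intro x hx
    have key : A * (x - (-B - d) / (2 * A)) * (x - (-B + d) / (2 * A)) = 0 := by
      field_simp
      ring_nf
      linear_combination 4*A*hx - hd2
    rcases mul_eq_zero.mp key with h | h
    · rcases mul_eq_zero.mp h with h' | h'
      · exact absurd h' hA.ne'
      · exact Or.inl (sub_eq_zero.mp h')
    · exact Or.inr (sub_eq_zero.mp h)
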